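/- Let K be a quantum channel on C^n with Kraus operators K_1,...,K_d, F_min(K) > 0, and w̃ the optimal unit vector as in Eq. (9). Then there exists a unit vector ψ ∈ C^n such that ⟨ψ| ∑_i w̃_i K_i |ψ⟩ = F_min(K) exactly (as a real number). -/

import Mathlib

open Matrix
open scoped ComplexOrder

noncomputable section

/-- The outer product `u ⊗ u†` is positive semidefinite. -/
lemma outer_posSemidef {n : ℕ} (u : Fin n → ℂ) :
    (Matrix.vecMulVec u (star u)).PosSemidef := by
  have h : Matrix.vecMulVec u (star u) = (Matrix.replicateCol (Fin 1) u) * (Matrix.replicateCol (Fin 1) u)ᴴ := by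
    ext i j
    simp [Matrix.vecMulVec_apply, Matrix.mul_apply, Matrix.replicateCol_apply, Matrix.conjTranspose_apply]
  rw [h]
  exact Matrix.posSemidef_self_mul_conjTranspose _

lemma outer_trace {n : ℕ} (u : Fin n → ℂ) :
    (Matrix.vecMulVec u (star u)).trace = star u ⬝ᵥ u := by
  simp [Matrix.trace, Matrix.diag, Matrix.vecMulVec_apply, dotProduct, mul_comm]

lemma outer_mul_trace {n : ℕ} (u : Fin n → ℂ) (B : Matrix (Fin n) (Fin n) ℂ) :
    (Matrix.vecMulVec u (star u) * B).trace = star u ⬝ᵥ B.mulVec u := by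
  simp only [Matrix.trace, Matrix.diag, Matrix.mul_apply, Matrix.vecMulVec_apply,
    dotProduct, Matrix.mulVec, Pi.star_apply]
  rw [Finset.sum_comm]
  congr 1; ext m
  rw [Finset.mul_sum]
  congr 1; ext k
  ring

lemma smul_posSemidef {n : ℕ} {M : Matrix (Fin n) (Fin n) ℂ} (hM : M.PosSemidef)
    {t : ℝ} (ht : 0 ≤ t) : ((t : ℂ) • M).PosSemidef := by
  constructor
  · unfold Matrix.IsHermitian
    rw [Matrix.conjTranspose_smul, hM.1]
    congr 1
    simp [Complex.ext_iff]
  · intro x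
    exact (hM.smul (a := (t : ℂ)) (by rw [Complex.le_def]; simp [ht])).2 x

/-- A point of the numerical range lying between two points with equal real part `F`, imaginary
parts of opposite signs: there is a unit vector realizing exactly `F`. -/
lemma aux2D {n : ℕ} (M : Matrix (Fin n) (Fin n) ℂ) (F : ℝ) (u v : Fin n → ℂ)
    (huu : star u ⬝ᵥ u = 1) (hvv : star v ⬝ᵥ v = 1)
    (huv : star u ⬝ᵥ v = 0) (hvu : star v ⬝ᵥ u = 0)
    (hur : (star u ⬝ᵥ M.mulVec u).re = F) (hvr : (star v ⬝ᵥ M.mulVec v).re = F)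
    (hui : 0 ≤ (star u ⬝ᵥ M.mulVec u).im) (hvi : (star v ⬝ᵥ M.mulVec v).im ≤ 0) :
    ∃ ψ : Fin n → ℂ, star ψ ⬝ᵥ ψ = 1 ∧ star ψ ⬝ᵥ M.mulVec ψ = (F : ℂ) := by
  set zu := star u ⬝ᵥ M.mulVec u with hzu
  set zv := star v ⬝ᵥ M.mulVec v with hzv
  set a := star u ⬝ᵥ M.mulVec v with ha
  set b := star v ⬝ᵥ M.mulVec u with hb
  -- choose a phase e with |e| = 1 and (e*a + conj e * b).re = 0
  obtain ⟨e, he1, he2⟩ : ∃ e : ℂ, (starRingEnd ℂ) e * e = 1 ∧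
      (e * a + (starRingEnd ℂ) e * b).re = 0 := by
    by_cases hw : (a + b).re = 0 ∧ (a - b).im = 0
    · exact ⟨1, by simp, by simpa using hw.1⟩
    · set r := Real.sqrt ((a + b).re ^ 2 + (a - b).im ^ 2) with hr
      have hrpos : 0 < r := by
        apply Real.sqrt_pos.2
        rcases not_and_or.mp hw with h | h
        · positivity
        · positivity
      set e : ℂ := ⟨(a - b).im / r, (a + b).re / r⟩ with he
      refine ⟨e, ?_, ?_⟩
      · have h1 : (starRingEnd ℂ) e * e = (Complex.normSq e : ℂ) := by
          rw [mul_comm]; exact Complex.mul_conj e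
        rw [h1]
        have h2 : Complex.normSq e = 1 := by
          simp only [Complex.normSq_mk, he]
          field_simp
          rw [hr, Real.sq_sqrt (by positivity)]
          simp only [Complex.add_re, Complex.sub_im]
          ring
        rw [h2]; simp
      · simp only [Complex.add_re, Complex.mul_re, Complex.conj_re, Complex.conj_im, he]
        field_simp
        rw [Complex.sub_im]; ring
  -- the imaginary part function
  set h : ℝ → ℝ := fun t => (Real.cos t) ^ 2 * zu.im + (Real.sin t) ^ 2 * zv.im
      + Real.cos t * Real.sin t * (e * a + (starRingEnd ℂ) e * b).im with hh
  have hcont : Continuous h := by fun_prop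
  have h0 : h 0 = zu.im := by simp [hh]
  have hpi : h (Real.pi / 2) = zv.im := by simp [hh]
  have hmem : (0:ℝ) ∈ Set.Icc (h (Real.pi / 2)) (h 0) := by
    rw [h0, hpi]; exact ⟨hvi, hui⟩
  obtain ⟨t, _, ht0⟩ := intermediate_value_Icc' (by positivity : (0:ℝ) ≤ Real.pi / 2)
    hcont.continuousOn hmem
  -- the witness
  set x : ℂ := (Real.cos t : ℂ) with hx
  set y : ℂ := (Real.sin t : ℂ) * e with hy
  have hxc : (starRingEnd ℂ) x = x := by rw [hx]; exact Complex.conj_ofReal _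
  have hyc : (starRingEnd ℂ) y * y = ((Real.sin t : ℂ))^2 := by
    rw [hy, RingHom.map_mul, Complex.conj_ofReal]
    calc (Real.sin t : ℂ) * (starRingEnd ℂ) e * ((Real.sin t : ℂ) * e)
        = (Real.sin t : ℂ) * (Real.sin t : ℂ) * ((starRingEnd ℂ) e * e) := by ring
      _ = ((Real.sin t : ℂ))^2 := by rw [he1]; ring
  refine ⟨x • u + y • v, ?_, ?_⟩
  · have expand : star (x • u + y • v) ⬝ᵥ (x • u + y • v)
        = (starRingEnd ℂ) x * x * (star u ⬝ᵥ u) + (starRingEnd ℂ) x * y * (star u ⬝ᵥ v)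
          + (starRingEnd ℂ) y * x * (star v ⬝ᵥ u) + (starRingEnd ℂ) y * y * (star v ⬝ᵥ v) := by
      simp only [star_add, star_smul, add_dotProduct, smul_dotProduct,
        dotProduct_add, dotProduct_smul, smul_eq_mul, RCLike.star_def]
      ring
    rw [expand, huu, hvv, huv, hvu, hxc, hyc]
    simp only [mul_zero, mul_one, add_zero, hx]
    calc (Real.cos t : ℂ) * (Real.cos t : ℂ) + ((Real.sin t : ℂ))^2
        = ((Real.cos t ^ 2 + Real.sin t ^ 2 : ℝ) : ℂ) := by push_cast; ring
      _ = 1 := by rw [Real.cos_sq_add_sin_sq]; simp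
  · have expandM : star (x • u + y • v) ⬝ᵥ M.mulVec (x • u + y • v)
        = (starRingEnd ℂ) x * x * zu + (starRingEnd ℂ) x * y * a
          + (starRingEnd ℂ) y * x * b + (starRingEnd ℂ) y * y * zv := by
      simp only [star_add, star_smul, add_dotProduct, smul_dotProduct,
        Matrix.mulVec_add, Matrix.mulVec_smul, dotProduct_add,
        dotProduct_smul, smul_eq_mul, RCLike.star_def, hzu, hzv, ha, hb]
      ring
    rw [expandM, hxc, hyc]
    have hV : x * x * zu + x * y * a + (starRingEnd ℂ) y * x * b + ((Real.sin t : ℂ))^2 * zv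
        = ((Real.cos t ^ 2 : ℝ) : ℂ) * zu + ((Real.sin t ^ 2 : ℝ) : ℂ) * zv
          + ((Real.cos t * Real.sin t : ℝ) : ℂ) * (e * a + (starRingEnd ℂ) e * b) := by
      rw [hx, hy, RingHom.map_mul, Complex.conj_ofReal]
      push_cast
      ring
    rw [hV]
    have hq := he2
    rw [hh] at ht0
    simp only at ht0
    apply Complex.ext
    · simp only [Complex.add_re, Complex.re_ofReal_mul, Complex.ofReal_re, hur, hvr, hq,
        mul_zero, add_zero]
      linear_combination F * Real.cos_sq_add_sin_sq t
    · simp only [Complex.add_im, Complex.im_ofReal_mul, Complex.ofReal_im]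
      rw [Complex.add_im] at ht0
      linarith

/-- First-order optimality: for the optimal `ρt` and any density matrix `ρ`,
`Fmin² ≤ Re ∑ i Tr(ρt Kᵢ) conj (Tr(ρ Kᵢ))`. -/
lemma key_ineq {n d : ℕ}
    (K : Fin d → Matrix (Fin n) (Fin n) ℂ)
    (ρt : Matrix (Fin n) (Fin n) ℂ) (hρt : ρt.PosSemidef) (htr : ρt.trace = 1)
    (Fmin : ℝ)
    (hF2 : Fmin ^ 2 = ∑ i, Complex.normSq ((ρt * K i).trace))
    (hopt : ∀ ρ : Matrix (Fin n) (Fin n) ℂ, ρ.PosSemidef → ρ.trace = 1 →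
      Fmin ≤ Real.sqrt (∑ i, ‖(ρ * K i).trace‖ ^ 2))
    (hFpos : 0 < Fmin)
    (ρ : Matrix (Fin n) (Fin n) ℂ) (hρ : ρ.PosSemidef) (hρtr : ρ.trace = 1) :
    Fmin ^ 2 ≤ ∑ i, ((ρt * K i).trace * starRingEnd ℂ ((ρ * K i).trace)).re := by
  set c : Fin d → ℂ := fun i => (ρt * K i).trace with hc
  set b : Fin d → ℂ := fun i => (ρ * K i).trace with hb
  set dd : Fin d → ℂ := fun i => b i - c i with hdd
  set A : ℝ := ∑ i, (c i * starRingEnd ℂ (dd i)).re with hA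
  set S2 : ℝ := ∑ i, Complex.normSq (dd i) with hS2
  have hS2nonneg : 0 ≤ S2 := Finset.sum_nonneg fun i _ => Complex.normSq_nonneg _
  -- the quadratic inequality
  have hquad : ∀ t : ℝ, 0 ≤ t → t ≤ 1 → 0 ≤ 2 * t * A + t ^ 2 * S2 := by
    intro t ht0 ht1
    set σ : Matrix (Fin n) (Fin n) ℂ := ((1 - t : ℝ) : ℂ) • ρt + ((t : ℝ) : ℂ) • ρ with hσ
    have hσps : σ.PosSemidef :=
      (smul_posSemidef hρt (by linarith)).add (smul_posSemidef hρ ht0)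
    have hσtr : σ.trace = 1 := by
      rw [hσ, Matrix.trace_add, Matrix.trace_smul, Matrix.trace_smul, htr, hρtr]
      simp only [smul_eq_mul, mul_one]
      push_cast
      ring
    have hσK : ∀ i, (σ * K i).trace = c i + (t : ℂ) * dd i := by
      intro i
      rw [hσ, Matrix.add_mul, Matrix.smul_mul, Matrix.smul_mul, Matrix.trace_add,
        Matrix.trace_smul, Matrix.trace_smul, smul_eq_mul, smul_eq_mul]
      simp only [hdd, hb, hc]
      push_cast
      ring
    have hle := hopt σ hσps hσtr
    have hle2 : Fmin ^ 2 ≤ ∑ i, Complex.normSq ((σ * K i).trace) := by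
      have hX : (0:ℝ) ≤ ∑ i, ‖(σ * K i).trace‖ ^ 2 :=
        Finset.sum_nonneg fun i _ => by positivity
      have := (Real.le_sqrt hFpos.le hX).mp hle
      calc Fmin ^ 2 ≤ ∑ i, ‖(σ * K i).trace‖ ^ 2 := this
        _ = ∑ i, Complex.normSq ((σ * K i).trace) := by
            congr 1; ext i; rw [Complex.sq_norm]
    have hexp : ∀ i, Complex.normSq ((σ * K i).trace)
        = Complex.normSq (c i) + 2 * t * (c i * starRingEnd ℂ (dd i)).re
          + t ^ 2 * Complex.normSq (dd i) := by
      intro i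
      rw [hσK i]
      simp only [Complex.normSq_apply, Complex.add_re, Complex.add_im, Complex.mul_re,
        Complex.mul_im, Complex.ofReal_re, Complex.ofReal_im, Complex.conj_re, Complex.conj_im,
        Complex.sub_re, Complex.sub_im]
      ring
    have hsum : ∑ i, Complex.normSq ((σ * K i).trace)
        = Fmin ^ 2 + (2 * t * A + t ^ 2 * S2) := by
      rw [hF2, hA, hS2]
      rw [Finset.sum_congr rfl fun i _ => hexp i]
      rw [Finset.sum_add_distrib, Finset.sum_add_distrib, Finset.mul_sum, Finset.mul_sum]
      ring
    rw [hsum] at hle2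
    linarith
  -- nonnegativity of A
  have hAnonneg : 0 ≤ A := by
    by_contra hAneg
    push_neg at hAneg
    rcases eq_or_lt_of_le hS2nonneg with hS20 | hS2pos
    · have := hquad 1 zero_le_one le_rfl
      rw [← hS20] at this
      nlinarith
    · set t0 : ℝ := min 1 (-A / S2) with ht0def
      have ht0pos : 0 < t0 := lt_min one_pos (div_pos (neg_pos.2 hAneg) hS2pos)
      have ht0le1 : t0 ≤ 1 := min_le_left _ _
      have ht0le : t0 * S2 ≤ -A := by
        have h1 : t0 ≤ -A / S2 := min_le_right _ _
        calc t0 * S2 ≤ (-A / S2) * S2 := by nlinarith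
          _ = -A := by field_simp
      have hq := hquad t0 ht0pos.le ht0le1
      nlinarith
  -- conclusion
  have hsplit : ∀ i, (c i * starRingEnd ℂ (b i)).re
      = (c i * starRingEnd ℂ (dd i)).re + Complex.normSq (c i) := by
    intro i
    have : c i * starRingEnd ℂ (b i) = c i * starRingEnd ℂ (dd i) + c i * starRingEnd ℂ (c i) := by
      simp only [hdd]
      rw [map_sub]
      ring
    rw [this, Complex.add_re, Complex.mul_conj]
    simp
  rw [Finset.sum_congr rfl fun i _ => hsplit i, Finset.sum_add_distrib]
  rw [← hF2] at *
  linarith [hAnonneg]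

/-- Lemma 2: for an optimal density matrix `ρ̃` achieving
`F_min(𝒦) = min_ρ max_w |∑ i w i Tr(ρ K i)| = √(∑ i |Tr(ρ̃ K i)|²) > 0` and the
optimal dual vector `w̃ i = conj (Tr(ρ̃ K i)) / F_min`, there exists a unit vector
`ψ` with `⟨ψ|∑ i w̃ i K i|ψ⟩ = F_min(𝒦)` exactly, as a real number. -/
theorem exists_state_achieving_Fmin {n d : ℕ} (hn : 0 < n) (hd : 0 < d)
    (K : Fin d → Matrix (Fin n) (Fin n) ℂ)
    (hK : ∑ i, (K i)ᴴ * K i = 1)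
    (ρt : Matrix (Fin n) (Fin n) ℂ) (hρt : ρt.PosSemidef) (htr : ρt.trace = 1)
    (Fmin : ℝ)
    (hFval : Fmin = Real.sqrt (∑ i, ‖(ρt * K i).trace‖ ^ 2))
    (hopt : ∀ ρ : Matrix (Fin n) (Fin n) ℂ, ρ.PosSemidef → ρ.trace = 1 →
      Fmin ≤ Real.sqrt (∑ i, ‖(ρ * K i).trace‖ ^ 2))
    (hFpos : 0 < Fmin)
    (wt : Fin d → ℂ)
    (hwt : ∀ i, wt i = starRingEnd ℂ ((ρt * K i).trace) / (Fmin : ℂ)) :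
    ∃ ψ : Fin n → ℂ, star ψ ⬝ᵥ ψ = 1 ∧
      star ψ ⬝ᵥ (∑ i, wt i • K i).mulVec ψ = (Fmin : ℂ) := by
  set M : Matrix (Fin n) (Fin n) ℂ := ∑ i, wt i • K i with hM
  set c : Fin d → ℂ := fun i => (ρt * K i).trace with hc
  have hFne : (Fmin : ℂ) ≠ 0 := by
    simpa using Complex.ofReal_ne_zero.mpr hFpos.ne'
  -- F² = ∑ |cᵢ|²
  have hF2 : Fmin ^ 2 = ∑ i, Complex.normSq (c i) := by
    have hX : (0:ℝ) ≤ ∑ i, ‖(ρt * K i).trace‖ ^ 2 :=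
      Finset.sum_nonneg fun i _ => by positivity
    rw [hFval, Real.sq_sqrt hX]
    exact Finset.sum_congr rfl fun i _ => Complex.sq_norm _
  -- trace against M
  have htraceM : ∀ σ : Matrix (Fin n) (Fin n) ℂ,
      (σ * M).trace = ∑ i, wt i * (σ * K i).trace := by
    intro σ
    rw [hM, Finset.mul_sum]
    rw [Matrix.trace_sum]
    congr 1; ext i
    rw [Matrix.mul_smul, Matrix.trace_smul, smul_eq_mul]
  -- the key lower bound on the real part
  have hkey : ∀ σ : Matrix (Fin n) (Fin n) ℂ, σ.PosSemidef → σ.trace = 1 →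
      Fmin ≤ ((σ * M).trace).re := by
    intro σ hps htr1
    have h1 := key_ineq K ρt hρt htr Fmin hF2 hopt hFpos σ hps htr1
    have h2 : (σ * M).trace = (∑ i, starRingEnd ℂ (c i) * (σ * K i).trace) / (Fmin : ℂ) := by
      rw [htraceM σ, Finset.sum_div]
      congr 1; ext i
      rw [hwt i]
      ring
    have h4 : ∀ i, (starRingEnd ℂ (c i) * (σ * K i).trace).re
        = (c i * starRingEnd ℂ ((σ * K i).trace)).re := by
      intro i
      have : starRingEnd ℂ (c i) * (σ * K i).trace
          = starRingEnd ℂ (c i * starRingEnd ℂ ((σ * K i).trace)) := by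
        rw [RingHom.map_mul, Complex.conj_conj]
      rw [this, Complex.conj_re]
    have h3 : ((σ * M).trace).re
        = (∑ i, (c i * starRingEnd ℂ ((σ * K i).trace)).re) / Fmin := by
      rw [h2, Complex.div_ofReal_re, Complex.re_sum]
      congr 1
      exact Finset.sum_congr rfl fun i _ => h4 i
    rw [h3, le_div_iff₀ hFpos]
    nlinarith [h1]
  -- the optimal value is attained by ρt exactly
  have htrρt : (ρt * M).trace = (Fmin : ℂ) := by
    rw [htraceM ρt]
    have hterm : ∀ i, wt i * (ρt * K i).trace = (Complex.normSq (c i) : ℂ) / (Fmin : ℂ) := by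
      intro i
      rw [hwt i]
      rw [div_mul_eq_mul_div]
      congr 1
      rw [mul_comm, Complex.mul_conj]
    rw [Finset.sum_congr rfl fun i _ => hterm i, ← Finset.sum_div]
    have : (∑ i, (Complex.normSq (c i) : ℂ)) = ((Fmin ^ 2 : ℝ) : ℂ) := by
      rw [hF2]; push_cast; ring
    rw [this]
    push_cast
    rw [sq, mul_div_assoc, div_self hFne, mul_one]
  -- spectral decomposition of ρt
  have hH := hρt.1
  set Uc : Matrix (Fin n) (Fin n) ℂ := (hH.eigenvectorUnitary : Matrix (Fin n) (Fin n) ℂ) with hUc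
  set u : Fin n → Fin n → ℂ := fun j => ⇑(hH.eigenvectorBasis j) with hu
  set lam := hH.eigenvalues with hlam
  set D : Matrix (Fin n) (Fin n) ℂ := Matrix.diagonal (RCLike.ofReal ∘ lam) with hD
  have hspec : ρt = Uc * D * star Uc := hH.spectral_theorem
  have hUcol : ∀ k j, Uc k j = u j k := by
    intro k j
    rw [hUc, hu]
    exact Matrix.IsHermitian.eigenvectorUnitary_apply hH k j
  have hij : ∀ i j, star (u i) ⬝ᵥ u j = if i = j then (1:ℂ) else 0 := by
    intro i j
    have h := orthonormal_iff_ite.mp hH.eigenvectorBasis.orthonormal i j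
    rw [EuclideanSpace.inner_eq_star_dotProduct, dotProduct_comm] at h
    exact h
  have hone : ∀ j, star (u j) ⬝ᵥ u j = 1 := by
    intro j
    rw [hij j j, if_pos rfl]
  have hUU : star Uc * Uc = 1 := by
    ext i j
    rw [Matrix.mul_apply, Matrix.one_apply]
    have h := hij i j
    simp only [dotProduct, Pi.star_apply] at h
    rw [← h]
    apply Finset.sum_congr rfl
    intro k _
    rw [Matrix.star_apply, hUcol k i, hUcol k j]
  set z : Fin n → ℂ := fun j => star (u j) ⬝ᵥ M.mulVec (u j) with hz
  have hBjj : ∀ j, (star Uc * M * Uc) j j = z j := by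
    intro j
    rw [Matrix.mul_apply]
    simp only [Matrix.mul_apply, Matrix.star_apply, hz, dotProduct, Matrix.mulVec,
      Pi.star_apply]
    simp only [Finset.sum_mul, Finset.mul_sum]
    rw [Finset.sum_comm]
    apply Finset.sum_congr rfl
    intro k _
    apply Finset.sum_congr rfl
    intro m _
    rw [hUcol k j, hUcol m j]
    ring
  have hDtr : ∀ B : Matrix (Fin n) (Fin n) ℂ, (D * B).trace = ∑ j, ((lam j : ℂ)) * B j j := by
    intro B
    rw [hD, Matrix.trace]
    apply Finset.sum_congr rfl
    intro j _
    rw [Matrix.diag]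
    rw [Matrix.diagonal_mul]
    rfl
  have htr1 : (ρt * M).trace = ∑ j, ((lam j : ℂ)) * z j := by
    conv_lhs => rw [hspec]
    have e1 : Uc * D * star Uc * M = Uc * (D * (star Uc * M)) := by
      rw [Matrix.mul_assoc, Matrix.mul_assoc]
    rw [e1, Matrix.trace_mul_comm]
    have e2 : D * (star Uc * M) * Uc = D * (star Uc * M * Uc) := by
      rw [Matrix.mul_assoc, Matrix.mul_assoc]
    rw [e2, hDtr]
    exact Finset.sum_congr rfl fun j _ => by rw [hBjj j]
  have hsumlam : ∑ j, lam j = 1 := by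
    have h1 : ρt.trace = ∑ j, ((lam j : ℝ) : ℂ) := by
      conv_lhs => rw [hspec]
      rw [Matrix.trace_mul_comm, ← Matrix.mul_assoc, hUU, Matrix.one_mul, hD,
        Matrix.trace_diagonal]
      rfl
    rw [htr] at h1
    have h2 : ((∑ j, lam j : ℝ) : ℂ) = 1 := by push_cast; rw [← h1]
    exact_mod_cast h2
  have hlampos : ∀ j, 0 ≤ lam j := fun j => hρt.eigenvalues_nonneg j
  -- each z j has real part ≥ Fmin
  have hzre : ∀ j, Fmin ≤ (z j).re := by
    intro j
    have h1 := outer_posSemidef (u j)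
    have h2 : (Matrix.vecMulVec (u j) (star (u j))).trace = 1 := by
      rw [outer_trace, hone j]
    have h3 := hkey _ h1 h2
    rw [outer_mul_trace] at h3
    exact h3
  -- the convex combination equals Fmin
  have hcomb : ∑ j, ((lam j : ℂ)) * z j = (Fmin : ℂ) := by rw [← htr1, htrρt]
  have hre : ∑ j, lam j * (z j).re = Fmin := by
    have h := congrArg Complex.re hcomb
    rw [Complex.re_sum] at h
    simpa [Complex.re_ofReal_mul] using h
  have him : ∑ j, lam j * (z j).im = 0 := by
    have h := congrArg Complex.im hcomb
    rw [Complex.im_sum] at h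
    simpa [Complex.im_ofReal_mul] using h
  -- positive-weight eigenvectors have Re z = Fmin
  have hterm : ∀ j, 0 < lam j → (z j).re = Fmin := by
    have hzero : ∑ j, lam j * ((z j).re - Fmin) = 0 := by
      have hexp : ∑ j, lam j * ((z j).re - Fmin)
          = (∑ j, lam j * (z j).re) - (∑ j, lam j) * Fmin := by
        rw [Finset.sum_mul, ← Finset.sum_sub_distrib]
        apply Finset.sum_congr rfl
        intro j _
        ring
      rw [hexp, hre, hsumlam]
      ring
    intro j hj
    have hnn : ∀ i ∈ Finset.univ, 0 ≤ lam i * ((z i).re - Fmin) := fun i _ =>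
      mul_nonneg (hlampos i) (by linarith [hzre i])
    have h0 := (Finset.sum_eq_zero_iff_of_nonneg hnn).mp hzero j (Finset.mem_univ j)
    rcases mul_eq_zero.mp h0 with h | h
    · exact absurd h hj.ne'
    · linarith [h]
  have hex : ∃ j, 0 < lam j := by
    by_contra hno
    push_neg at hno
    have h : ∑ j, lam j = 0 := Finset.sum_eq_zero fun j _ => le_antisymm (hno j) (hlampos j)
    rw [hsumlam] at h
    norm_num at h
  by_cases hcase : ∃ j, 0 < lam j ∧ (z j).im = 0
  · obtain ⟨j, hj, hjim⟩ := hcase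
    refine ⟨u j, hone j, ?_⟩
    have hzF : z j = (Fmin : ℂ) := by
      apply Complex.ext
      · rw [hterm j hj]; simp
      · rw [hjim]; simp
    exact hzF
  · push_neg at hcase
    have hpos : ∃ j, 0 < lam j ∧ 0 < (z j).im := by
      by_contra hno
      push_neg at hno
      obtain ⟨j0, hj0⟩ := hex
      have hlt : lam j0 * (z j0).im < 0 :=
        mul_neg_of_pos_of_neg hj0 (lt_of_le_of_ne (hno j0 hj0) (hcase j0 hj0))
      have hstrict : ∑ j, lam j * (z j).im < 0 := by
        calc ∑ j, lam j * (z j).im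
            ≤ ∑ j, (if j = j0 then lam j0 * (z j0).im else 0) := by
              apply Finset.sum_le_sum
              intro j _
              by_cases hjj : j = j0
              · subst hjj; simp
              · rw [if_neg hjj]
                rcases eq_or_lt_of_le (hlampos j) with h | h
                · rw [← h]; simp
                · exact le_of_lt
                    (mul_neg_of_pos_of_neg h (lt_of_le_of_ne (hno j h) (hcase j h)))
          _ = lam j0 * (z j0).im := by simp
          _ < 0 := hlt
      linarith [him, hstrict]
    have hneg : ∃ k, 0 < lam k ∧ (z k).im < 0 := by
      by_contra hno
      push_neg at hno
      obtain ⟨j1, hj1, hj1im⟩ := hpos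
      have hstrict : 0 < ∑ j, lam j * (z j).im := by
        apply Finset.sum_pos'
        · intro j _
          rcases eq_or_lt_of_le (hlampos j) with h | h
          · rw [← h]; simp
          · exact mul_nonneg h.le (hno j h)
        · exact ⟨j1, Finset.mem_univ j1, mul_pos hj1 hj1im⟩
      linarith [him, hstrict]
    obtain ⟨j1, hj1l, hj1i⟩ := hpos
    obtain ⟨k1, hk1l, hk1i⟩ := hneg
    have hjk : j1 ≠ k1 := by
      intro hh
      rw [hh] at hj1i
      linarith
    have huv0 : star (u j1) ⬝ᵥ u k1 = 0 := by rw [hij]; exact if_neg hjk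
    have hvu0 : star (u k1) ⬝ᵥ u j1 = 0 := by rw [hij]; exact if_neg (Ne.symm hjk)
    exact aux2D M Fmin (u j1) (u k1) (hone j1) (hone k1) huv0 hvu0
      (hterm j1 hj1l) (hterm k1 hk1l) hj1i.le hk1i.le

end
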